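/- Fix positive integers N1, N2 and positive reals γ̄1, γ̄2, ζ̄1, ζ̄2 with γ̄1 ≠ ζ̄1 and γ̄2 ≠ ζ̄2. For i = 1, 2, let {E_{i,n} : 1 ≤ n ≤ Ni}, {E'_{i,n} : 1 ≤ n ≤ Ni}, and {Z_{i,n} : 1 ≤ n ≤ Ni} be families of random variables, all of them mutually independent, where each E_{i,n} and E'_{i,n} is exponentially distributed with mean γ̄i and each Z_{i,n} is exponentially distributed with mean ζ̄i. Define γi = max_{1 ≤ n ≤ Ni} E_{i,n} and κi = max_{1 ≤ n ≤ Ni} (E'_{i,n} + Z_{i,n}). Fix R1, R2 ≥ 0, set Rsum = R1 + R2, R̃i = 2^{Ri} − 1, R̃sum = 2^{Rsum} − 1. Then P( {log2(1+γ1) ≤ R1} ∪ {log2(1+γ2) ≤ R2} ∪ {min(log2(1+κ1), log2(1+κ2)) ≤ Rsum} ) = 1 − ∏_{i=1,2} [1 − (1 − e^{−R̃i/γ̄i})^{Ni}] · ∏_{i=1,2} [1 − (1 − (γ̄i e^{−R̃sum/γ̄i} − ζ̄i e^{−R̃sum/ζ̄i})/(γ̄i − ζ̄i))^{Ni}]. 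-/

import Mathlib

open MeasureTheory ProbabilityTheory Real

/-- The law of an exponentially distributed random variable with mean `θ`: density
`t ↦ (1/θ)·exp(−t/θ)` w.r.t. Lebesgue measure on `[0, ∞)`, density `0` on `(−∞, 0)`. -/
noncomputable def expLaw (θ : ℝ) : Measure ℝ :=
  volume.withDensity fun t => ENNReal.ofReal (if 0 ≤ t then (1 / θ) * Real.exp (-t / θ) else 0)

/-- `X` is exponentially distributed with mean `θ` (under `μ`). -/
def IsExpMean {Ω : Type*} [MeasurableSpace Ω] (μ : Measure Ω) (X : Ω → ℝ) (θ : ℝ) : Prop :=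
  Measurable X ∧ μ.map X = expLaw θ

section FamaAuxLemmas

open Set Filter

lemma expLaw_eq (θ : ℝ) : expLaw θ = volume.withDensity (exponentialPDF θ⁻¹) := by
  unfold expLaw
  congr 1
  funext t
  rw [exponentialPDF_eq]
  congr 1
  split_ifs with h
  · rw [one_div]
    congr 1
    ring_nf
  · rfl

lemma expLaw_isProb {θ : ℝ} (hθ : 0 < θ) : IsProbabilityMeasure (expLaw θ) := by
  rw [expLaw_eq]
  exact isProbabilityMeasure_expMeasure (by positivity)

lemma expLaw_Iic {θ : ℝ} (hθ : 0 < θ) (x : ℝ) :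
    expLaw θ (Iic x) = ENNReal.ofReal (if 0 ≤ x then 1 - Real.exp (-x / θ) else 0) := by
  rw [expLaw_eq, withDensity_apply _ measurableSet_Iic,
    lintegral_exponentialPDF_eq_antiDeriv (by positivity) x]
  congr 1
  split_ifs with h
  · congr 2
    ring
  · rfl

lemma expLaw_Iio_zero {θ : ℝ} : expLaw θ (Iio 0) = 0 := by
  rw [expLaw_eq, withDensity_apply _ measurableSet_Iio]
  exact lintegral_exponentialPDF_of_nonpos le_rfl

lemma hypoexp_cdf {γ ζ s : ℝ} (hγ : 0 < γ) (hζ : 0 < ζ) (hne : γ ≠ ζ) (hs : 0 ≤ s) :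
    0 ≤ 1 - (γ * Real.exp (-s / γ) - ζ * Real.exp (-s / ζ)) / (γ - ζ) ∧
    ((expLaw γ).prod (expLaw ζ)) {p : ℝ × ℝ | p.1 + p.2 ≤ s}
      = ENNReal.ofReal (1 - (γ * Real.exp (-s / γ) - ζ * Real.exp (-s / ζ)) / (γ - ζ)) := by
  haveI := expLaw_isProb hγ
  haveI := expLaw_isProb hζ
  have hγζ : γ - ζ ≠ 0 := sub_ne_zero.2 hne
  set ψ : ℝ → ℝ := fun x => (1/γ) * Real.exp (-x/γ) * (1 - Real.exp (-(s - x)/ζ)) with hψdef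
  set φ : ℝ → ℝ := fun x =>
    (if 0 ≤ x then (1/γ) * Real.exp (-x/γ) else 0) *
    (if 0 ≤ s - x then 1 - Real.exp (-(s - x)/ζ) else 0) with hφdef
  have hφ_nonneg : ∀ x, 0 ≤ φ x := by
    intro x
    apply mul_nonneg
    · split_ifs <;> positivity
    · split_ifs with h
      · have h0 : -(s - x)/ζ ≤ 0 := div_nonpos_of_nonpos_of_nonneg (by linarith) hζ.le
        have := Real.exp_le_one_iff.2 h0
        linarith
      · exact le_rfl
  have hψc : Continuous ψ := by
    apply Continuous.mul
    · exact continuous_const.mul ((continuous_id.neg.div_const γ).rexp)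
    · exact continuous_const.sub (((continuous_const.sub continuous_id).neg.div_const ζ).rexp)
  have hφeq : φ = (Icc 0 s).indicator ψ := by
    funext x
    simp only [hφdef, hψdef, Set.indicator_apply, Set.mem_Icc]
    split_ifs with h1 h2 h3 h4 h5 h6 h7
    · rfl
    · exact absurd ⟨h1, by linarith⟩ h3
    · exact absurd (by linarith [h4.2] : (0:ℝ) ≤ s - x) h2
    · simp
    · exact absurd h6.1 h1
    · simp
    · exact absurd h7.1 h1
    · simp
  have hφint : Integrable φ := by
    rw [hφeq]
    exact (hψc.integrableOn_Icc).integrable_indicator measurableSet_Icc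
  -- the value of the integral
  set c2 : ℝ := 1/ζ - 1/γ with hc2
  set H : ℝ → ℝ := fun x =>
    -Real.exp (x * (-1/γ)) - (ζ/(γ-ζ)) * Real.exp (-s/ζ) * Real.exp (x * c2) with hH
  have hHderiv : ∀ x, HasDerivAt H (ψ x) x := by
    intro x
    have e1 : HasDerivAt (fun x : ℝ => Real.exp (x * (-1/γ)))
        (Real.exp (x * (-1/γ)) * (-1/γ)) x := (hasDerivAt_mul_const (-1/γ)).exp
    have e2 : HasDerivAt (fun x : ℝ => Real.exp (x * c2)) (Real.exp (x * c2) * c2) x :=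
      (hasDerivAt_mul_const c2).exp
    have := (e1.neg).sub (e2.const_mul ((ζ/(γ-ζ)) * Real.exp (-s/ζ)))
    refine this.congr_deriv ?_
    have hxg : x * (-1/γ) = -x/γ := by ring
    have hprod : Real.exp (-s/ζ) * Real.exp (x * c2) = Real.exp (-x/γ) * Real.exp (-(s - x)/ζ) := by
      rw [← Real.exp_add, ← Real.exp_add]
      congr 1
      rw [hc2]; ring
    rw [hψdef, hxg]
    have expand : (ζ/(γ-ζ)) * Real.exp (-s/ζ) * (Real.exp (x * c2) * c2)
        = (ζ/(γ-ζ)) * c2 * (Real.exp (-x/γ) * Real.exp (-(s - x)/ζ)) := by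
      rw [← hprod]; ring
    rw [expand]
    have hcoef : (ζ/(γ-ζ)) * c2 = 1/γ := by
      rw [hc2]; field_simp
      try ring
    rw [hcoef]; ring
  have hintval : ∫ x, φ x = 1 - (γ * Real.exp (-s / γ) - ζ * Real.exp (-s / ζ)) / (γ - ζ) := by
    rw [hφeq, integral_indicator measurableSet_Icc, integral_Icc_eq_integral_Ioc,
      ← intervalIntegral.integral_of_le hs,
      intervalIntegral.integral_eq_sub_of_hasDerivAt (fun x _ => hHderiv x)
        (hψc.intervalIntegrable 0 s)]
    rw [hH]
    simp only [zero_mul, Real.exp_zero]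
    have h1 : s * (-1/γ) = -s/γ := by ring
    have h2 : Real.exp (-s/ζ) * Real.exp (s * c2) = Real.exp (-s/γ) := by
      rw [← Real.exp_add]; congr 1; rw [hc2]; ring
    rw [h1]
    have : (ζ/(γ-ζ)) * Real.exp (-s/ζ) * Real.exp (s * c2) = (ζ/(γ-ζ)) * Real.exp (-s/γ) := by
      rw [mul_assoc, h2]
    rw [this]
    field_simp
    ring
  have hd_nonneg : 0 ≤ 1 - (γ * Real.exp (-s / γ) - ζ * Real.exp (-s / ζ)) / (γ - ζ) := by
    rw [← hintval]
    exact integral_nonneg hφ_nonneg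
  refine ⟨hd_nonneg, ?_⟩
  -- now the measure computation
  have hmset : MeasurableSet {p : ℝ × ℝ | p.1 + p.2 ≤ s} :=
    measurableSet_le (measurable_fst.add measurable_snd) measurable_const
  have hD : Measurable (fun t : ℝ => ENNReal.ofReal (if 0 ≤ t then (1/γ) * Real.exp (-t/γ) else 0)) := by
    apply Measurable.ennreal_ofReal
    apply Measurable.ite measurableSet_Ici _ measurable_const
    fun_prop
  have hg : Measurable (fun x : ℝ => ENNReal.ofReal (if 0 ≤ s - x then 1 - Real.exp (-(s-x)/ζ) else 0)) := by
    apply Measurable.ennreal_ofReal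
    apply Measurable.ite (measurableSet_le measurable_const (measurable_const.sub measurable_id)) _ measurable_const
    fun_prop
  calc ((expLaw γ).prod (expLaw ζ)) {p : ℝ × ℝ | p.1 + p.2 ≤ s}
      = ∫⁻ x, expLaw ζ (Prod.mk x ⁻¹' {p : ℝ × ℝ | p.1 + p.2 ≤ s}) ∂(expLaw γ) :=
        Measure.prod_apply hmset
    _ = ∫⁻ x, ENNReal.ofReal (if 0 ≤ s - x then 1 - Real.exp (-(s-x)/ζ) else 0) ∂(expLaw γ) := by
        apply lintegral_congr
        intro x
        have : Prod.mk x ⁻¹' {p : ℝ × ℝ | p.1 + p.2 ≤ s} = Iic (s - x) := by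
          ext y; simp only [Set.mem_preimage, Set.mem_setOf_eq, Set.mem_Iic]; constructor <;> intro <;> linarith
        rw [this, expLaw_Iic hζ]
    _ = ∫⁻ x, (fun t : ℝ => ENNReal.ofReal (if 0 ≤ t then (1/γ) * Real.exp (-t/γ) else 0)) x *
          ENNReal.ofReal (if 0 ≤ s - x then 1 - Real.exp (-(s-x)/ζ) else 0) ∂volume := by
        rw [expLaw, lintegral_withDensity_eq_lintegral_mul _ hD hg]
        rfl
    _ = ∫⁻ x, ENNReal.ofReal (φ x) ∂volume := by
        apply lintegral_congr
        intro x
        rw [hφdef]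
        rw [← ENNReal.ofReal_mul (by split_ifs <;> positivity)]
    _ = ENNReal.ofReal (∫ x, φ x) :=
        (ofReal_integral_eq_lintegral_ofReal hφint (Filter.Eventually.of_forall hφ_nonneg)).symm
    _ = ENNReal.ofReal (1 - (γ * Real.exp (-s / γ) - ζ * Real.exp (-s / ζ)) / (γ - ζ)) := by
        rw [hintval]

lemma meas_biInter_blocks {Ω ι κ : Type*} [MeasurableSpace Ω] {μ : Measure Ω}
    [IsProbabilityMeasure μ] [DecidableEq ι] [DecidableEq κ]
    {f : ι → Ω → ℝ} (hindep : iIndepFun f μ)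
    (hmeas : ∀ i, Measurable (f i))
    (S : κ → Finset ι) (hS : Pairwise (Function.onFun Disjoint S))
    (B : ∀ k, Set (↥(S k) → ℝ)) (hB : ∀ k, MeasurableSet (B k))
    (t : Finset κ) :
    μ (⋂ k ∈ t, (fun ω (i : ↥(S k)) => f i ω) ⁻¹' B k)
      = ∏ k ∈ t, μ ((fun ω (i : ↥(S k)) => f i ω) ⁻¹' B k) := by
  classical
  induction t using Finset.induction_on with
  | empty => simp
  | @insert k₀ t hk₀ ih =>
    set U : Finset ι := t.biUnion S with hU
    have hdisj : Disjoint (S k₀) U := by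
      rw [hU, Finset.disjoint_biUnion_right]
      intro k hk
      exact hS (fun h => hk₀ (h ▸ hk))
    have hXY := hindep.indepFun_finset (S k₀) U hdisj hmeas
    set res : ∀ k, (↥U → ℝ) → (↥(S k) → ℝ) :=
      fun k g i => if h : (i : ι) ∈ U then g ⟨i, h⟩ else 0 with hres_def
    have hres : ∀ k, Measurable (res k) := by
      intro k
      apply measurable_pi_lambda
      intro i
      by_cases h : (i : ι) ∈ U
      · simp only [hres_def, h, dif_pos]
        exact measurable_pi_apply _
      · simp only [hres_def, h, dif_neg, not_false_iff]
        exact measurable_const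
    set C : Set (↥U → ℝ) := ⋂ k ∈ t, res k ⁻¹' B k with hCdef
    have hC : MeasurableSet C :=
      MeasurableSet.biInter t.countable_toSet fun k _ => (hres k) (hB k)
    have hpre : (fun ω (i : ↥U) => f i ω) ⁻¹' C
        = ⋂ k ∈ t, (fun ω (i : ↥(S k)) => f i ω) ⁻¹' B k := by
      ext ω
      simp only [Set.mem_preimage, hCdef, Set.mem_iInter]
      refine forall₂_congr fun k hk => ?_
      have hfun : res k (fun (i : ↥U) => f i ω)
          = fun (i : ↥(S k)) => f i ω := by
        funext i
        have hiU : (i : ι) ∈ U := Finset.mem_biUnion.2 ⟨k, hk, i.2⟩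
        simp only [hres_def, hiU, dif_pos]
      rw [hfun]
    rw [Finset.set_biInter_insert, Finset.prod_insert hk₀, ← hpre, ← ih, ← hpre,
      hXY.measure_inter_preimage_eq_mul _ _ (hB k₀) hC]

lemma logb_sup_le_iff {N : ℕ} (hN : 0 < N) (g : Fin N → ℝ) (hg : ∀ n, 0 ≤ g n) (R : ℝ) :
    Real.logb 2 (1 + ⨆ n, g n) ≤ R ↔ ∀ n, g n ≤ (2:ℝ) ^ R - 1 := by
  haveI : Nonempty (Fin N) := ⟨⟨0, hN⟩⟩
  have hbdd : BddAbove (Set.range g) := Set.Finite.bddAbove (Set.finite_range g)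
  have h0 : 0 ≤ ⨆ n, g n := le_ciSup_of_le hbdd (Classical.arbitrary _) (hg _)
  rw [Real.logb_le_iff_le_rpow one_lt_two (by linarith)]
  constructor
  · intro h n
    have := le_ciSup hbdd n
    linarith
  · intro h
    have : (⨆ n, g n) ≤ (2:ℝ)^R - 1 := ciSup_le h
    linarith

lemma one_le_two_rpow {R : ℝ} (hR : 0 ≤ R) : (1:ℝ) ≤ (2:ℝ) ^ R := by
  rw [show (1:ℝ) = (2:ℝ) ^ (0:ℝ) by simp]
  exact Real.rpow_le_rpow_of_exponent_le one_le_two hR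


end FamaAuxLemmas

section MainProof

open Set Filter
open scoped ENNReal

/-- **Outage probability of the FAMA interference channel (Theorem 1), independent ports.**
For `i = 1, 2`, `γi = max_{1 ≤ n ≤ Ni} E_{i,n}` and `κi = max_{1 ≤ n ≤ Ni} (E'_{i,n} + Z_{i,n})`,
where all the `E_{i,n}, E'_{i,n}, Z_{i,n}` are mutually independent, `E_{i,n}, E'_{i,n}` are
exponential with mean `γmi` and `Z_{i,n}` is exponential with mean `ζmi`.  Then the outage
probability equals
`1 − ∏_{i} [1 − (1 − e^{−R̃i/γmi})^{Ni}] · ∏_{i} [1 − (1 − (γmi e^{−R̃sum/γmi} − ζmi e^{−R̃sum/ζmi})/(γmi − ζmi))^{Ni}]`. -/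
theorem outage_probability_fama_ic
    {Ω : Type*} [MeasurableSpace Ω] (μ : Measure Ω) [IsProbabilityMeasure μ]
    (N1 N2 : ℕ) (hN1 : 0 < N1) (hN2 : 0 < N2)
    (γm1 γm2 ζm1 ζm2 : ℝ) (hγm1 : 0 < γm1) (hγm2 : 0 < γm2) (hζm1 : 0 < ζm1) (hζm2 : 0 < ζm2)
    (hne1 : γm1 ≠ ζm1) (hne2 : γm2 ≠ ζm2)
    (E1 E1' Z1 : Fin N1 → Ω → ℝ) (E2 E2' Z2 : Fin N2 → Ω → ℝ)
    (hE1 : ∀ n, IsExpMean μ (E1 n) γm1) (hE1' : ∀ n, IsExpMean μ (E1' n) γm1)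
    (hZ1 : ∀ n, IsExpMean μ (Z1 n) ζm1)
    (hE2 : ∀ n, IsExpMean μ (E2 n) γm2) (hE2' : ∀ n, IsExpMean μ (E2' n) γm2)
    (hZ2 : ∀ n, IsExpMean μ (Z2 n) ζm2)
    (hindep : iIndepFun
      (Sum.elim (Sum.elim E1 (Sum.elim E1' Z1)) (Sum.elim E2 (Sum.elim E2' Z2))) μ)
    (R1 R2 : ℝ) (hR1 : 0 ≤ R1) (hR2 : 0 ≤ R2) :
    (μ ({ω | Real.logb 2 (1 + ⨆ n, E1 n ω) ≤ R1} ∪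
        {ω | Real.logb 2 (1 + ⨆ n, E2 n ω) ≤ R2} ∪
        {ω | min (Real.logb 2 (1 + ⨆ n, (E1' n ω + Z1 n ω)))
               (Real.logb 2 (1 + ⨆ n, (E2' n ω + Z2 n ω))) ≤ R1 + R2})).toReal =
      1 - (1 - (1 - Real.exp (-((2 : ℝ) ^ R1 - 1) / γm1)) ^ N1)
          * (1 - (1 - Real.exp (-((2 : ℝ) ^ R2 - 1) / γm2)) ^ N2)
          * ((1 - (1 - (γm1 * Real.exp (-((2 : ℝ) ^ (R1 + R2) - 1) / γm1)
                        - ζm1 * Real.exp (-((2 : ℝ) ^ (R1 + R2) - 1) / ζm1)) / (γm1 - ζm1)) ^ N1)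
            * (1 - (1 - (γm2 * Real.exp (-((2 : ℝ) ^ (R1 + R2) - 1) / γm2)
                        - ζm2 * Real.exp (-((2 : ℝ) ^ (R1 + R2) - 1) / ζm2)) / (γm2 - ζm2)) ^ N2)) := by
  classical
  set f := Sum.elim (Sum.elim E1 (Sum.elim E1' Z1)) (Sum.elim E2 (Sum.elim E2' Z2)) with hf
  have hfm : ∀ i, Measurable (f i) := by
    rintro ((n | (n | n)) | (n | (n | n)))
    exacts [(hE1 n).1, (hE1' n).1, (hZ1 n).1, (hE2 n).1, (hE2' n).1, (hZ2 n).1]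
  set r1 := (2:ℝ) ^ R1 - 1 with hr1def
  set r2 := (2:ℝ) ^ R2 - 1 with hr2def
  set rs := (2:ℝ) ^ (R1 + R2) - 1 with hrsdef
  have hr1 : 0 ≤ r1 := by rw [hr1def]; linarith [one_le_two_rpow hR1]
  have hr2 : 0 ≤ r2 := by rw [hr2def]; linarith [one_le_two_rpow hR2]
  have hrs : 0 ≤ rs := by rw [hrsdef]; linarith [one_le_two_rpow (add_nonneg hR1 hR2)]
  set c1 := 1 - Real.exp (-r1 / γm1) with hc1def
  set c2 := 1 - Real.exp (-r2 / γm2) with hc2def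
  set d1 := 1 - (γm1 * Real.exp (-rs / γm1) - ζm1 * Real.exp (-rs / ζm1)) / (γm1 - ζm1) with hd1def
  set d2 := 1 - (γm2 * Real.exp (-rs / γm2) - ζm2 * Real.exp (-rs / ζm2)) / (γm2 - ζm2) with hd2def
  have hc1_nonneg : 0 ≤ c1 := by
    rw [hc1def]
    have : Real.exp (-r1 / γm1) ≤ 1 := Real.exp_le_one_iff.2 (div_nonpos_of_nonpos_of_nonneg (by linarith) hγm1.le)
    linarith
  have hc1_le_one : c1 ≤ 1 := by rw [hc1def]; have := Real.exp_pos (-r1 / γm1); linarith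
  have hc2_nonneg : 0 ≤ c2 := by
    rw [hc2def]
    have : Real.exp (-r2 / γm2) ≤ 1 := Real.exp_le_one_iff.2 (div_nonpos_of_nonpos_of_nonneg (by linarith) hγm2.le)
    linarith
  have hc2_le_one : c2 ≤ 1 := by rw [hc2def]; have := Real.exp_pos (-r2 / γm2); linarith
  have hhyp1 := hypoexp_cdf hγm1 hζm1 hne1 hrs
  have hhyp2 := hypoexp_cdf hγm2 hζm2 hne2 hrs
  have hd1_nonneg : 0 ≤ d1 := by rw [hd1def]; exact hhyp1.1
  have hd2_nonneg : 0 ≤ d2 := by rw [hd2def]; exact hhyp2.1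
  -- threshold events
  set S1 : Set Ω := {ω | ∀ n, E1 n ω ≤ r1} with hS1
  set S2 : Set Ω := {ω | ∀ n, E2 n ω ≤ r2} with hS2
  set P1 : Set Ω := {ω | ∀ n, E1' n ω + Z1 n ω ≤ rs} with hP1
  set P2 : Set Ω := {ω | ∀ n, E2' n ω + Z2 n ω ≤ rs} with hP2
  have hS1m : MeasurableSet S1 := by
    rw [hS1, show {ω | ∀ n, E1 n ω ≤ r1} = ⋂ n, {ω | E1 n ω ≤ r1} from by
      ext ω; simp [Set.mem_iInter]]
    exact MeasurableSet.iInter fun n => measurableSet_le (hE1 n).1 measurable_const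
  have hS2m : MeasurableSet S2 := by
    rw [hS2, show {ω | ∀ n, E2 n ω ≤ r2} = ⋂ n, {ω | E2 n ω ≤ r2} from by
      ext ω; simp [Set.mem_iInter]]
    exact MeasurableSet.iInter fun n => measurableSet_le (hE2 n).1 measurable_const
  have hP1m : MeasurableSet P1 := by
    rw [hP1, show {ω | ∀ n, E1' n ω + Z1 n ω ≤ rs} = ⋂ n, {ω | E1' n ω + Z1 n ω ≤ rs} from by
      ext ω; simp [Set.mem_iInter]]
    exact MeasurableSet.iInter fun n => measurableSet_le ((hE1' n).1.add (hZ1 n).1) measurable_const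
  have hP2m : MeasurableSet P2 := by
    rw [hP2, show {ω | ∀ n, E2' n ω + Z2 n ω ≤ rs} = ⋂ n, {ω | E2' n ω + Z2 n ω ≤ rs} from by
      ext ω; simp [Set.mem_iInter]]
    exact MeasurableSet.iInter fun n => measurableSet_le ((hE2' n).1.add (hZ2 n).1) measurable_const
  -- Step 1 : a.e. identification of the outage event with the threshold event
  have hae : ∀ᵐ ω ∂μ, ∀ i, 0 ≤ f i ω := by
    rw [ae_all_iff]
    intro i
    have hlaw : ∃ θ : ℝ, 0 < θ ∧ μ.map (f i) = expLaw θ := by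
      rcases i with ((n | (n | n)) | (n | (n | n)))
      exacts [⟨γm1, hγm1, (hE1 n).2⟩, ⟨γm1, hγm1, (hE1' n).2⟩, ⟨ζm1, hζm1, (hZ1 n).2⟩,
        ⟨γm2, hγm2, (hE2 n).2⟩, ⟨γm2, hγm2, (hE2' n).2⟩, ⟨ζm2, hζm2, (hZ2 n).2⟩]
    obtain ⟨θ, hθ, hmap⟩ := hlaw
    rw [ae_iff]
    have hset : {ω | ¬ 0 ≤ f i ω} = f i ⁻¹' (Set.Iio 0) := by
      ext ω; simp [Set.mem_Iio, not_le]
    rw [hset, ← Measure.map_apply (hfm i) measurableSet_Iio, hmap, expLaw_Iio_zero]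
  have hAeq : μ ({ω | Real.logb 2 (1 + ⨆ n, E1 n ω) ≤ R1} ∪
        {ω | Real.logb 2 (1 + ⨆ n, E2 n ω) ≤ R2} ∪
        {ω | min (Real.logb 2 (1 + ⨆ n, (E1' n ω + Z1 n ω)))
               (Real.logb 2 (1 + ⨆ n, (E2' n ω + Z2 n ω))) ≤ R1 + R2})
      = μ ((S1 ∪ S2) ∪ (P1 ∪ P2)) := by
    apply measure_congr
    rw [Filter.eventuallyEq_set]
    filter_upwards [hae] with ω hω
    have e1 : Real.logb 2 (1 + ⨆ n, E1 n ω) ≤ R1 ↔ ∀ n, E1 n ω ≤ r1 := by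
      rw [hr1def]
      exact logb_sup_le_iff hN1 _ (fun n => hω (Sum.inl (Sum.inl n))) R1
    have e2 : Real.logb 2 (1 + ⨆ n, E2 n ω) ≤ R2 ↔ ∀ n, E2 n ω ≤ r2 := by
      rw [hr2def]
      exact logb_sup_le_iff hN2 _ (fun n => hω (Sum.inr (Sum.inl n))) R2
    have k1 : Real.logb 2 (1 + ⨆ n, (E1' n ω + Z1 n ω)) ≤ R1 + R2 ↔
        ∀ n, E1' n ω + Z1 n ω ≤ rs := by
      rw [hrsdef]
      exact logb_sup_le_iff hN1 _
        (fun n => add_nonneg (hω (Sum.inl (Sum.inr (Sum.inl n)))) (hω (Sum.inl (Sum.inr (Sum.inr n))))) _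
    have k2 : Real.logb 2 (1 + ⨆ n, (E2' n ω + Z2 n ω)) ≤ R1 + R2 ↔
        ∀ n, E2' n ω + Z2 n ω ≤ rs := by
      rw [hrsdef]
      exact logb_sup_le_iff hN2 _
        (fun n => add_nonneg (hω (Sum.inr (Sum.inr (Sum.inl n)))) (hω (Sum.inr (Sum.inr (Sum.inr n))))) _
    simp only [Set.mem_union, Set.mem_setOf_eq, hS1, hS2, hP1, hP2, min_le_iff]
    rw [e1, e2, k1, k2]
  rw [hAeq]
  -- Step 2 : complement
  have hAm : MeasurableSet ((S1 ∪ S2) ∪ (P1 ∪ P2)) := (hS1m.union hS2m).union (hP1m.union hP2m)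
  have hcompl : ((S1 ∪ S2) ∪ (P1 ∪ P2))ᶜ = (S1ᶜ ∩ P1ᶜ) ∩ (S2ᶜ ∩ P2ᶜ) := by
    ext ω; simp only [Set.mem_compl_iff, Set.mem_union, Set.mem_inter_iff]; tauto
  have hstep2 : μ ((S1 ∪ S2) ∪ (P1 ∪ P2)) = 1 - μ ((S1ᶜ ∩ P1ᶜ) ∩ (S2ᶜ ∩ P2ᶜ)) := by
    have h := prob_compl_eq_one_sub (μ := μ) hAm.compl
    rw [compl_compl, hcompl] at h
    exact h
  rw [hstep2]
  -- Step 3 : finsets of indices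
  set SE1 : Finset ((Fin N1 ⊕ (Fin N1 ⊕ Fin N1)) ⊕ (Fin N2 ⊕ (Fin N2 ⊕ Fin N2))) :=
    Finset.univ.image (fun n : Fin N1 => Sum.inl (Sum.inl n)) with hSE1
  set SP1 : Finset ((Fin N1 ⊕ (Fin N1 ⊕ Fin N1)) ⊕ (Fin N2 ⊕ (Fin N2 ⊕ Fin N2))) :=
    Finset.univ.image (fun n : Fin N1 => Sum.inl (Sum.inr (Sum.inl n))) ∪
    Finset.univ.image (fun n : Fin N1 => Sum.inl (Sum.inr (Sum.inr n))) with hSP1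
  set SE2 : Finset ((Fin N1 ⊕ (Fin N1 ⊕ Fin N1)) ⊕ (Fin N2 ⊕ (Fin N2 ⊕ Fin N2))) :=
    Finset.univ.image (fun n : Fin N2 => Sum.inr (Sum.inl n)) with hSE2
  set SP2 : Finset ((Fin N1 ⊕ (Fin N1 ⊕ Fin N1)) ⊕ (Fin N2 ⊕ (Fin N2 ⊕ Fin N2))) :=
    Finset.univ.image (fun n : Fin N2 => Sum.inr (Sum.inr (Sum.inl n))) ∪
    Finset.univ.image (fun n : Fin N2 => Sum.inr (Sum.inr (Sum.inr n))) with hSP2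
  -- membership helpers
  have hmE1 : ∀ n : Fin N1, Sum.inl (Sum.inl n) ∈ SE1 :=
    fun n => Finset.mem_image_of_mem _ (Finset.mem_univ n)
  have hmP1a : ∀ n : Fin N1, (Sum.inl (Sum.inr (Sum.inl n)) :
      (Fin N1 ⊕ (Fin N1 ⊕ Fin N1)) ⊕ (Fin N2 ⊕ (Fin N2 ⊕ Fin N2))) ∈ SP1 :=
    fun n => Finset.mem_union_left _ (Finset.mem_image_of_mem _ (Finset.mem_univ n))
  have hmP1b : ∀ n : Fin N1, (Sum.inl (Sum.inr (Sum.inr n)) :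
      (Fin N1 ⊕ (Fin N1 ⊕ Fin N1)) ⊕ (Fin N2 ⊕ (Fin N2 ⊕ Fin N2))) ∈ SP1 :=
    fun n => Finset.mem_union_right _ (Finset.mem_image_of_mem _ (Finset.mem_univ n))
  have hmE2 : ∀ n : Fin N2, (Sum.inr (Sum.inl n) :
      (Fin N1 ⊕ (Fin N1 ⊕ Fin N1)) ⊕ (Fin N2 ⊕ (Fin N2 ⊕ Fin N2))) ∈ SE2 :=
    fun n => Finset.mem_image_of_mem _ (Finset.mem_univ n)
  have hmP2a : ∀ n : Fin N2, (Sum.inr (Sum.inr (Sum.inl n)) :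
      (Fin N1 ⊕ (Fin N1 ⊕ Fin N1)) ⊕ (Fin N2 ⊕ (Fin N2 ⊕ Fin N2))) ∈ SP2 :=
    fun n => Finset.mem_union_left _ (Finset.mem_image_of_mem _ (Finset.mem_univ n))
  have hmP2b : ∀ n : Fin N2, (Sum.inr (Sum.inr (Sum.inr n)) :
      (Fin N1 ⊕ (Fin N1 ⊕ Fin N1)) ⊕ (Fin N2 ⊕ (Fin N2 ⊕ Fin N2))) ∈ SP2 :=
    fun n => Finset.mem_union_right _ (Finset.mem_image_of_mem _ (Finset.mem_univ n))
  -- single-port CDF values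
  have hmarg1 : ∀ n : Fin N1, μ {ω | E1 n ω ≤ r1} = ENNReal.ofReal c1 := by
    intro n
    have hset : {ω | E1 n ω ≤ r1} = E1 n ⁻¹' (Set.Iic r1) := rfl
    rw [hset, ← Measure.map_apply (hE1 n).1 measurableSet_Iic, (hE1 n).2, expLaw_Iic hγm1,
      if_pos hr1, ← hc1def]
  have hmarg2 : ∀ n : Fin N2, μ {ω | E2 n ω ≤ r2} = ENNReal.ofReal c2 := by
    intro n
    have hset : {ω | E2 n ω ≤ r2} = E2 n ⁻¹' (Set.Iic r2) := rfl
    rw [hset, ← Measure.map_apply (hE2 n).1 measurableSet_Iic, (hE2 n).2, expLaw_Iic hγm2,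
      if_pos hr2, ← hc2def]
  have hsum_mset : MeasurableSet {p : ℝ × ℝ | p.1 + p.2 ≤ rs} :=
    measurableSet_le (measurable_fst.add measurable_snd) measurable_const
  have hmargP1 : ∀ n : Fin N1, μ {ω | E1' n ω + Z1 n ω ≤ rs} = ENNReal.ofReal d1 := by
    intro n
    have hIF : IndepFun (E1' n) (Z1 n) μ := by
      have h := hindep.indepFun (i := Sum.inl (Sum.inr (Sum.inl n)))
        (j := Sum.inl (Sum.inr (Sum.inr n))) (by simp)
      simpa [hf] using h
    have hpm : Measurable (fun ω => (E1' n ω, Z1 n ω)) := (hE1' n).1.prodMk (hZ1 n).1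
    have hmp : μ.map (fun ω => (E1' n ω, Z1 n ω)) = (expLaw γm1).prod (expLaw ζm1) := by
      rw [(indepFun_iff_map_prod_eq_prod_map_map (hE1' n).1.aemeasurable
        (hZ1 n).1.aemeasurable).1 hIF, (hE1' n).2, (hZ1 n).2]
    have hset : {ω | E1' n ω + Z1 n ω ≤ rs}
        = (fun ω => (E1' n ω, Z1 n ω)) ⁻¹' {p : ℝ × ℝ | p.1 + p.2 ≤ rs} := rfl
    rw [hset, ← Measure.map_apply hpm hsum_mset, hmp, hhyp1.2, ← hd1def]
  have hmargP2 : ∀ n : Fin N2, μ {ω | E2' n ω + Z2 n ω ≤ rs} = ENNReal.ofReal d2 := by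
    intro n
    have hIF : IndepFun (E2' n) (Z2 n) μ := by
      have h := hindep.indepFun (i := Sum.inr (Sum.inr (Sum.inl n)))
        (j := Sum.inr (Sum.inr (Sum.inr n))) (by simp)
      simpa [hf] using h
    have hpm : Measurable (fun ω => (E2' n ω, Z2 n ω)) := (hE2' n).1.prodMk (hZ2 n).1
    have hmp : μ.map (fun ω => (E2' n ω, Z2 n ω)) = (expLaw γm2).prod (expLaw ζm2) := by
      rw [(indepFun_iff_map_prod_eq_prod_map_map (hE2' n).1.aemeasurable
        (hZ2 n).1.aemeasurable).1 hIF, (hE2' n).2, (hZ2 n).2]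
    have hset : {ω | E2' n ω + Z2 n ω ≤ rs}
        = (fun ω => (E2' n ω, Z2 n ω)) ⁻¹' {p : ℝ × ℝ | p.1 + p.2 ≤ rs} := rfl
    rw [hset, ← Measure.map_apply hpm hsum_mset, hmp, hhyp2.2, ← hd2def]
  have hd1_le_one : d1 ≤ 1 := by
    have h := hmargP1 ⟨0, hN1⟩
    have hle : ENNReal.ofReal d1 ≤ 1 := h ▸ prob_le_one
    exact_mod_cast ENNReal.ofReal_le_one.1 hle
  have hd2_le_one : d2 ≤ 1 := by
    have h := hmargP2 ⟨0, hN2⟩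
    have hle : ENNReal.ofReal d2 ≤ 1 := h ▸ prob_le_one
    exact_mod_cast ENNReal.ofReal_le_one.1 hle
  -- product formulas for the threshold intersections
  have hS1val : μ S1 = ENNReal.ofReal (c1 ^ N1) := by
    have h := hindep.measure_inter_preimage_eq_mul SE1 (sets := fun _ => Set.Iic r1)
      (fun i _ => measurableSet_Iic)
    have hL : (⋂ i ∈ SE1, f i ⁻¹' Set.Iic r1) = S1 := by
      ext ω
      simp only [hSE1, Set.mem_iInter, Finset.mem_image, Finset.mem_univ, true_and, hS1,
        Set.mem_preimage, Set.mem_Iic, Set.mem_setOf_eq, forall_exists_index, hf,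
        Sum.elim_inl, Sum.elim_inr]
      constructor
      · intro hh n
        exact hh _ n rfl
      · rintro hh i n rfl
        exact hh n
    have hR : ∏ i ∈ SE1, μ (f i ⁻¹' Set.Iic r1) = ENNReal.ofReal (c1 ^ N1) := by
      rw [hSE1, Finset.prod_image (fun a _ b _ h => by simpa using h)]
      have : ∀ n : Fin N1, μ (f (Sum.inl (Sum.inl n)) ⁻¹' Set.Iic r1) = ENNReal.ofReal c1 := by
        intro n
        have : f (Sum.inl (Sum.inl n)) ⁻¹' Set.Iic r1 = {ω | E1 n ω ≤ r1} := by
          ext ω; simp [hf]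
        rw [this]; exact hmarg1 n
      rw [Finset.prod_congr rfl (fun n _ => this n), Finset.prod_const, Finset.card_univ,
        Fintype.card_fin, ENNReal.ofReal_pow hc1_nonneg]
    exact (congrArg μ hL.symm).trans (h.trans hR)
  have hS2val : μ S2 = ENNReal.ofReal (c2 ^ N2) := by
    have h := hindep.measure_inter_preimage_eq_mul SE2 (sets := fun _ => Set.Iic r2)
      (fun i _ => measurableSet_Iic)
    have hL : (⋂ i ∈ SE2, f i ⁻¹' Set.Iic r2) = S2 := by
      ext ω
      simp only [hSE2, Set.mem_iInter, Finset.mem_image, Finset.mem_univ, true_and, hS2,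
        Set.mem_preimage, Set.mem_Iic, Set.mem_setOf_eq, forall_exists_index, hf,
        Sum.elim_inl, Sum.elim_inr]
      constructor
      · intro hh n
        exact hh _ n rfl
      · rintro hh i n rfl
        exact hh n
    have hR : ∏ i ∈ SE2, μ (f i ⁻¹' Set.Iic r2) = ENNReal.ofReal (c2 ^ N2) := by
      rw [hSE2, Finset.prod_image (fun a _ b _ h => by simpa using h)]
      have : ∀ n : Fin N2, μ (f (Sum.inr (Sum.inl n)) ⁻¹' Set.Iic r2) = ENNReal.ofReal c2 := by
        intro n
        have : f (Sum.inr (Sum.inl n)) ⁻¹' Set.Iic r2 = {ω | E2 n ω ≤ r2} := by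
          ext ω; simp [hf]
        rw [this]; exact hmarg2 n
      rw [Finset.prod_congr rfl (fun n _ => this n), Finset.prod_const, Finset.card_univ,
        Fintype.card_fin, ENNReal.ofReal_pow hc2_nonneg]
    exact (congrArg μ hL.symm).trans (h.trans hR)
  have hP1val : μ P1 = ENNReal.ofReal (d1 ^ N1) := by
    set SS : Fin N1 → Finset ((Fin N1 ⊕ (Fin N1 ⊕ Fin N1)) ⊕ (Fin N2 ⊕ (Fin N2 ⊕ Fin N2))) :=
      fun n => {Sum.inl (Sum.inr (Sum.inl n)), Sum.inl (Sum.inr (Sum.inr n))} with hSS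
    have hm1 : ∀ n : Fin N1, Sum.inl (Sum.inr (Sum.inl n)) ∈ SS n := fun n => by simp [hSS]
    have hm2 : ∀ n : Fin N1, Sum.inl (Sum.inr (Sum.inr n)) ∈ SS n := fun n => by simp [hSS]
    set BB : ∀ n : Fin N1, Set (↥(SS n) → ℝ) :=
      fun n => {g | g ⟨Sum.inl (Sum.inr (Sum.inl n)), hm1 n⟩
                    + g ⟨Sum.inl (Sum.inr (Sum.inr n)), hm2 n⟩ ≤ rs} with hBB
    have hpairdisj : Pairwise (Function.onFun Disjoint SS) := by
      intro n m hnm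
      simp only [Function.onFun, hSS, Finset.disjoint_left, Finset.mem_insert,
        Finset.mem_singleton]
      rintro x (rfl | rfl) h
      · rcases h with h | h
        · exact hnm (by simpa using h)
        · simp at h
      · rcases h with h | h
        · simp at h
        · exact hnm (by simpa using h)
    have hBBm : ∀ n, MeasurableSet (BB n) := fun n => by
      rw [hBB]
      refine measurableSet_le (Measurable.add ?_ ?_) measurable_const <;>
        exact measurable_pi_apply _
    have h := meas_biInter_blocks hindep hfm SS hpairdisj BB hBBm Finset.univ
    have hsets : ∀ n : Fin N1,
        ((fun ω (i : ↥(SS n)) => f i ω) ⁻¹' BB n) = {ω | E1' n ω + Z1 n ω ≤ rs} :=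
      fun n => rfl
    have hLHS : (⋂ k ∈ (Finset.univ : Finset (Fin N1)),
        (fun ω (i : ↥(SS k)) => f i ω) ⁻¹' BB k) = P1 := by
      calc (⋂ k ∈ (Finset.univ : Finset (Fin N1)), (fun ω (i : ↥(SS k)) => f i ω) ⁻¹' BB k)
          = ⋂ k, (fun ω (i : ↥(SS k)) => f i ω) ⁻¹' BB k :=
            by ext ω; simp only [Set.mem_iInter, Finset.mem_univ, forall_true_left]
        _ = P1 := by
            rw [hP1]
            ext ω
            simp only [Set.mem_iInter, Set.mem_setOf_eq]
            exact forall_congr' fun n => Set.ext_iff.1 (hsets n) ω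
    have hRHS : (∏ k ∈ (Finset.univ : Finset (Fin N1)),
        μ ((fun ω (i : ↥(SS k)) => f i ω) ⁻¹' BB k)) = ENNReal.ofReal (d1 ^ N1) := by
      calc (∏ k ∈ (Finset.univ : Finset (Fin N1)), μ ((fun ω (i : ↥(SS k)) => f i ω) ⁻¹' BB k))
          = ∏ _k ∈ (Finset.univ : Finset (Fin N1)), ENNReal.ofReal d1 :=
            Finset.prod_congr rfl (fun k _ => by rw [hsets k]; exact hmargP1 k)
        _ = ENNReal.ofReal (d1 ^ N1) := by
            rw [Finset.prod_const, Finset.card_univ, Fintype.card_fin,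
              ENNReal.ofReal_pow hd1_nonneg]
    exact (congrArg μ hLHS.symm).trans (h.trans hRHS)
  have hP2val : μ P2 = ENNReal.ofReal (d2 ^ N2) := by
    set SS : Fin N2 → Finset ((Fin N1 ⊕ (Fin N1 ⊕ Fin N1)) ⊕ (Fin N2 ⊕ (Fin N2 ⊕ Fin N2))) :=
      fun n => {Sum.inr (Sum.inr (Sum.inl n)), Sum.inr (Sum.inr (Sum.inr n))} with hSS
    have hm1 : ∀ n : Fin N2, Sum.inr (Sum.inr (Sum.inl n)) ∈ SS n := fun n => by simp [hSS]
    have hm2 : ∀ n : Fin N2, Sum.inr (Sum.inr (Sum.inr n)) ∈ SS n := fun n => by simp [hSS]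
    set BB : ∀ n : Fin N2, Set (↥(SS n) → ℝ) :=
      fun n => {g | g ⟨Sum.inr (Sum.inr (Sum.inl n)), hm1 n⟩
                    + g ⟨Sum.inr (Sum.inr (Sum.inr n)), hm2 n⟩ ≤ rs} with hBB
    have hpairdisj : Pairwise (Function.onFun Disjoint SS) := by
      intro n m hnm
      simp only [Function.onFun, hSS, Finset.disjoint_left, Finset.mem_insert,
        Finset.mem_singleton]
      rintro x (rfl | rfl) h
      · rcases h with h | h
        · exact hnm (by simpa using h)
        · simp at h
      · rcases h with h | h
        · simp at h
        · exact hnm (by simpa using h)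
    have hBBm : ∀ n, MeasurableSet (BB n) := fun n => by
      rw [hBB]
      refine measurableSet_le (Measurable.add ?_ ?_) measurable_const <;>
        exact measurable_pi_apply _
    have h := meas_biInter_blocks hindep hfm SS hpairdisj BB hBBm Finset.univ
    have hsets : ∀ n : Fin N2,
        ((fun ω (i : ↥(SS n)) => f i ω) ⁻¹' BB n) = {ω | E2' n ω + Z2 n ω ≤ rs} :=
      fun n => rfl
    have hLHS : (⋂ k ∈ (Finset.univ : Finset (Fin N2)),
        (fun ω (i : ↥(SS k)) => f i ω) ⁻¹' BB k) = P2 := by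
      calc (⋂ k ∈ (Finset.univ : Finset (Fin N2)), (fun ω (i : ↥(SS k)) => f i ω) ⁻¹' BB k)
          = ⋂ k, (fun ω (i : ↥(SS k)) => f i ω) ⁻¹' BB k :=
            by ext ω; simp only [Set.mem_iInter, Finset.mem_univ, forall_true_left]
        _ = P2 := by
            rw [hP2]
            ext ω
            simp only [Set.mem_iInter, Set.mem_setOf_eq]
            exact forall_congr' fun n => Set.ext_iff.1 (hsets n) ω
    have hRHS : (∏ k ∈ (Finset.univ : Finset (Fin N2)),
        μ ((fun ω (i : ↥(SS k)) => f i ω) ⁻¹' BB k)) = ENNReal.ofReal (d2 ^ N2) := by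
      calc (∏ k ∈ (Finset.univ : Finset (Fin N2)), μ ((fun ω (i : ↥(SS k)) => f i ω) ⁻¹' BB k))
          = ∏ _k ∈ (Finset.univ : Finset (Fin N2)), ENNReal.ofReal d2 :=
            Finset.prod_congr rfl (fun k _ => by rw [hsets k]; exact hmargP2 k)
        _ = ENNReal.ofReal (d2 ^ N2) := by
            rw [Finset.prod_const, Finset.card_univ, Fintype.card_fin,
              ENNReal.ofReal_pow hd2_nonneg]
    exact (congrArg μ hLHS.symm).trans (h.trans hRHS)
  -- Step 4 : independence splits
  have hS1pre : (fun ω (i : ↥SE1) => f i ω) ⁻¹'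
      ({g : ↥SE1 → ℝ | ∀ n : Fin N1, g ⟨Sum.inl (Sum.inl n), hmE1 n⟩ ≤ r1}ᶜ) = S1ᶜ := rfl
  have hP1pre : (fun ω (i : ↥SP1) => f i ω) ⁻¹'
      ({g : ↥SP1 → ℝ | ∀ n : Fin N1,
        g ⟨Sum.inl (Sum.inr (Sum.inl n)), hmP1a n⟩ + g ⟨Sum.inl (Sum.inr (Sum.inr n)), hmP1b n⟩ ≤ rs}ᶜ)
      = P1ᶜ := rfl
  have hS2pre : (fun ω (i : ↥SE2) => f i ω) ⁻¹'
      ({g : ↥SE2 → ℝ | ∀ n : Fin N2, g ⟨Sum.inr (Sum.inl n), hmE2 n⟩ ≤ r2}ᶜ) = S2ᶜ := rfl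
  have hP2pre : (fun ω (i : ↥SP2) => f i ω) ⁻¹'
      ({g : ↥SP2 → ℝ | ∀ n : Fin N2,
        g ⟨Sum.inr (Sum.inr (Sum.inl n)), hmP2a n⟩ + g ⟨Sum.inr (Sum.inr (Sum.inr n)), hmP2b n⟩ ≤ rs}ᶜ)
      = P2ᶜ := rfl
  have hBS1m : MeasurableSet ({g : ↥SE1 → ℝ | ∀ n : Fin N1, g ⟨Sum.inl (Sum.inl n), hmE1 n⟩ ≤ r1}ᶜ) := by
    apply MeasurableSet.compl
    have : {g : ↥SE1 → ℝ | ∀ n : Fin N1, g ⟨Sum.inl (Sum.inl n), hmE1 n⟩ ≤ r1}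
        = ⋂ n : Fin N1, {g : ↥SE1 → ℝ | g ⟨Sum.inl (Sum.inl n), hmE1 n⟩ ≤ r1} := by
      ext g; simp [Set.mem_iInter]
    rw [this]
    exact MeasurableSet.iInter fun n => measurableSet_le (measurable_pi_apply _) measurable_const
  have hBP1m : MeasurableSet ({g : ↥SP1 → ℝ | ∀ n : Fin N1,
      g ⟨Sum.inl (Sum.inr (Sum.inl n)), hmP1a n⟩ + g ⟨Sum.inl (Sum.inr (Sum.inr n)), hmP1b n⟩ ≤ rs}ᶜ) := by
    apply MeasurableSet.compl
    have : {g : ↥SP1 → ℝ | ∀ n : Fin N1,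
        g ⟨Sum.inl (Sum.inr (Sum.inl n)), hmP1a n⟩ + g ⟨Sum.inl (Sum.inr (Sum.inr n)), hmP1b n⟩ ≤ rs}
        = ⋂ n : Fin N1, {g : ↥SP1 → ℝ |
          g ⟨Sum.inl (Sum.inr (Sum.inl n)), hmP1a n⟩ + g ⟨Sum.inl (Sum.inr (Sum.inr n)), hmP1b n⟩ ≤ rs} := by
      ext g; simp [Set.mem_iInter]
    rw [this]
    exact MeasurableSet.iInter fun n => by
      refine measurableSet_le (Measurable.add ?_ ?_) measurable_const <;>
        exact measurable_pi_apply _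
  have hBS2m : MeasurableSet ({g : ↥SE2 → ℝ | ∀ n : Fin N2, g ⟨Sum.inr (Sum.inl n), hmE2 n⟩ ≤ r2}ᶜ) := by
    apply MeasurableSet.compl
    have : {g : ↥SE2 → ℝ | ∀ n : Fin N2, g ⟨Sum.inr (Sum.inl n), hmE2 n⟩ ≤ r2}
        = ⋂ n : Fin N2, {g : ↥SE2 → ℝ | g ⟨Sum.inr (Sum.inl n), hmE2 n⟩ ≤ r2} := by
      ext g; simp [Set.mem_iInter]
    rw [this]
    exact MeasurableSet.iInter fun n => measurableSet_le (measurable_pi_apply _) measurable_const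
  have hBP2m : MeasurableSet ({g : ↥SP2 → ℝ | ∀ n : Fin N2,
      g ⟨Sum.inr (Sum.inr (Sum.inl n)), hmP2a n⟩ + g ⟨Sum.inr (Sum.inr (Sum.inr n)), hmP2b n⟩ ≤ rs}ᶜ) := by
    apply MeasurableSet.compl
    have : {g : ↥SP2 → ℝ | ∀ n : Fin N2,
        g ⟨Sum.inr (Sum.inr (Sum.inl n)), hmP2a n⟩ + g ⟨Sum.inr (Sum.inr (Sum.inr n)), hmP2b n⟩ ≤ rs}
        = ⋂ n : Fin N2, {g : ↥SP2 → ℝ |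
          g ⟨Sum.inr (Sum.inr (Sum.inl n)), hmP2a n⟩ + g ⟨Sum.inr (Sum.inr (Sum.inr n)), hmP2b n⟩ ≤ rs} := by
      ext g; simp [Set.mem_iInter]
    rw [this]
    exact MeasurableSet.iInter fun n => by
      refine measurableSet_le (Measurable.add ?_ ?_) measurable_const <;>
        exact measurable_pi_apply _
  -- disjointness
  have hd_SE1_SP1 : Disjoint SE1 SP1 := by
    rw [Finset.disjoint_left]
    intro a ha hb
    rw [hSE1] at ha
    rw [hSP1] at hb
    obtain ⟨n, -, rfl⟩ := Finset.mem_image.1 ha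
    rcases Finset.mem_union.1 hb with hb | hb <;>
      · obtain ⟨m, -, hm⟩ := Finset.mem_image.1 hb
        simp at hm
  have hd_SE2_SP2 : Disjoint SE2 SP2 := by
    rw [Finset.disjoint_left]
    intro a ha hb
    rw [hSE2] at ha
    rw [hSP2] at hb
    obtain ⟨n, -, rfl⟩ := Finset.mem_image.1 ha
    rcases Finset.mem_union.1 hb with hb | hb <;>
      · obtain ⟨m, -, hm⟩ := Finset.mem_image.1 hb
        simp at hm
  have hLshape : ∀ a ∈ SE1 ∪ SP1, ∃ y, a = Sum.inl y := by
    intro a ha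
    rcases Finset.mem_union.1 ha with h | h
    · rw [hSE1] at h
      obtain ⟨n, -, rfl⟩ := Finset.mem_image.1 h
      exact ⟨_, rfl⟩
    · rw [hSP1] at h
      rcases Finset.mem_union.1 h with h | h <;>
        · obtain ⟨n, -, rfl⟩ := Finset.mem_image.1 h
          exact ⟨_, rfl⟩
  have hRshape : ∀ a ∈ SE2 ∪ SP2, ∃ y, a = Sum.inr y := by
    intro a ha
    rcases Finset.mem_union.1 ha with h | h
    · rw [hSE2] at h
      obtain ⟨n, -, rfl⟩ := Finset.mem_image.1 h
      exact ⟨_, rfl⟩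
    · rw [hSP2] at h
      rcases Finset.mem_union.1 h with h | h <;>
        · obtain ⟨n, -, rfl⟩ := Finset.mem_image.1 h
          exact ⟨_, rfl⟩
  have hd_LR : Disjoint (SE1 ∪ SP1) (SE2 ∪ SP2) := by
    rw [Finset.disjoint_left]
    intro a ha hb
    obtain ⟨y, rfl⟩ := hLshape a ha
    obtain ⟨z, hz⟩ := hRshape _ hb
    simp at hz
  -- left split
  have hleft : μ (S1ᶜ ∩ P1ᶜ) = μ S1ᶜ * μ P1ᶜ := by
    have h := (hindep.indepFun_finset SE1 SP1 hd_SE1_SP1 hfm).measure_inter_preimage_eq_mul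
      _ _ hBS1m hBP1m
    rw [hS1pre, hP1pre] at h
    exact h
  have hright : μ (S2ᶜ ∩ P2ᶜ) = μ S2ᶜ * μ P2ᶜ := by
    have h := (hindep.indepFun_finset SE2 SP2 hd_SE2_SP2 hfm).measure_inter_preimage_eq_mul
      _ _ hBS2m hBP2m
    rw [hS2pre, hP2pre] at h
    exact h
  -- top split : need left block as a preimage over SE1 ∪ SP1
  have hmE1L : ∀ n : Fin N1, (Sum.inl (Sum.inl n) :
      (Fin N1 ⊕ (Fin N1 ⊕ Fin N1)) ⊕ (Fin N2 ⊕ (Fin N2 ⊕ Fin N2))) ∈ SE1 ∪ SP1 :=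
    fun n => Finset.mem_union_left _ (hmE1 n)
  have hmP1aL : ∀ n : Fin N1, (Sum.inl (Sum.inr (Sum.inl n)) :
      (Fin N1 ⊕ (Fin N1 ⊕ Fin N1)) ⊕ (Fin N2 ⊕ (Fin N2 ⊕ Fin N2))) ∈ SE1 ∪ SP1 :=
    fun n => Finset.mem_union_right _ (hmP1a n)
  have hmP1bL : ∀ n : Fin N1, (Sum.inl (Sum.inr (Sum.inr n)) :
      (Fin N1 ⊕ (Fin N1 ⊕ Fin N1)) ⊕ (Fin N2 ⊕ (Fin N2 ⊕ Fin N2))) ∈ SE1 ∪ SP1 :=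
    fun n => Finset.mem_union_right _ (hmP1b n)
  have hmE2R : ∀ n : Fin N2, (Sum.inr (Sum.inl n) :
      (Fin N1 ⊕ (Fin N1 ⊕ Fin N1)) ⊕ (Fin N2 ⊕ (Fin N2 ⊕ Fin N2))) ∈ SE2 ∪ SP2 :=
    fun n => Finset.mem_union_left _ (hmE2 n)
  have hmP2aR : ∀ n : Fin N2, (Sum.inr (Sum.inr (Sum.inl n)) :
      (Fin N1 ⊕ (Fin N1 ⊕ Fin N1)) ⊕ (Fin N2 ⊕ (Fin N2 ⊕ Fin N2))) ∈ SE2 ∪ SP2 :=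
    fun n => Finset.mem_union_right _ (hmP2a n)
  have hmP2bR : ∀ n : Fin N2, (Sum.inr (Sum.inr (Sum.inr n)) :
      (Fin N1 ⊕ (Fin N1 ⊕ Fin N1)) ⊕ (Fin N2 ⊕ (Fin N2 ⊕ Fin N2))) ∈ SE2 ∪ SP2 :=
    fun n => Finset.mem_union_right _ (hmP2b n)
  have hLpre : (fun ω (i : ↥(SE1 ∪ SP1)) => f i ω) ⁻¹'
      (({g : ↥(SE1 ∪ SP1) → ℝ | ∀ n : Fin N1, g ⟨Sum.inl (Sum.inl n), hmE1L n⟩ ≤ r1}ᶜ) ∩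
       ({g : ↥(SE1 ∪ SP1) → ℝ | ∀ n : Fin N1,
         g ⟨Sum.inl (Sum.inr (Sum.inl n)), hmP1aL n⟩ + g ⟨Sum.inl (Sum.inr (Sum.inr n)), hmP1bL n⟩ ≤ rs}ᶜ))
      = S1ᶜ ∩ P1ᶜ := rfl
  have hRpre : (fun ω (i : ↥(SE2 ∪ SP2)) => f i ω) ⁻¹'
      (({g : ↥(SE2 ∪ SP2) → ℝ | ∀ n : Fin N2, g ⟨Sum.inr (Sum.inl n), hmE2R n⟩ ≤ r2}ᶜ) ∩
       ({g : ↥(SE2 ∪ SP2) → ℝ | ∀ n : Fin N2,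
         g ⟨Sum.inr (Sum.inr (Sum.inl n)), hmP2aR n⟩ + g ⟨Sum.inr (Sum.inr (Sum.inr n)), hmP2bR n⟩ ≤ rs}ᶜ))
      = S2ᶜ ∩ P2ᶜ := rfl
  have hBLm : MeasurableSet
      (({g : ↥(SE1 ∪ SP1) → ℝ | ∀ n : Fin N1, g ⟨Sum.inl (Sum.inl n), hmE1L n⟩ ≤ r1}ᶜ) ∩
       ({g : ↥(SE1 ∪ SP1) → ℝ | ∀ n : Fin N1,
         g ⟨Sum.inl (Sum.inr (Sum.inl n)), hmP1aL n⟩ + g ⟨Sum.inl (Sum.inr (Sum.inr n)), hmP1bL n⟩ ≤ rs}ᶜ)) := by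
    apply MeasurableSet.inter
    · apply MeasurableSet.compl
      have : {g : ↥(SE1 ∪ SP1) → ℝ | ∀ n : Fin N1, g ⟨Sum.inl (Sum.inl n), hmE1L n⟩ ≤ r1}
          = ⋂ n : Fin N1, {g : ↥(SE1 ∪ SP1) → ℝ | g ⟨Sum.inl (Sum.inl n), hmE1L n⟩ ≤ r1} := by
        ext g; simp [Set.mem_iInter]
      rw [this]
      exact MeasurableSet.iInter fun n => measurableSet_le (measurable_pi_apply _) measurable_const
    · apply MeasurableSet.compl
      have : {g : ↥(SE1 ∪ SP1) → ℝ | ∀ n : Fin N1,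
          g ⟨Sum.inl (Sum.inr (Sum.inl n)), hmP1aL n⟩ + g ⟨Sum.inl (Sum.inr (Sum.inr n)), hmP1bL n⟩ ≤ rs}
          = ⋂ n : Fin N1, {g : ↥(SE1 ∪ SP1) → ℝ |
            g ⟨Sum.inl (Sum.inr (Sum.inl n)), hmP1aL n⟩ + g ⟨Sum.inl (Sum.inr (Sum.inr n)), hmP1bL n⟩ ≤ rs} := by
        ext g; simp [Set.mem_iInter]
      rw [this]
      exact MeasurableSet.iInter fun n => by
        refine measurableSet_le (Measurable.add ?_ ?_) measurable_const <;>
          exact measurable_pi_apply _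
  have hBRm : MeasurableSet
      (({g : ↥(SE2 ∪ SP2) → ℝ | ∀ n : Fin N2, g ⟨Sum.inr (Sum.inl n), hmE2R n⟩ ≤ r2}ᶜ) ∩
       ({g : ↥(SE2 ∪ SP2) → ℝ | ∀ n : Fin N2,
         g ⟨Sum.inr (Sum.inr (Sum.inl n)), hmP2aR n⟩ + g ⟨Sum.inr (Sum.inr (Sum.inr n)), hmP2bR n⟩ ≤ rs}ᶜ)) := by
    apply MeasurableSet.inter
    · apply MeasurableSet.compl
      have : {g : ↥(SE2 ∪ SP2) → ℝ | ∀ n : Fin N2, g ⟨Sum.inr (Sum.inl n), hmE2R n⟩ ≤ r2}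
          = ⋂ n : Fin N2, {g : ↥(SE2 ∪ SP2) → ℝ | g ⟨Sum.inr (Sum.inl n), hmE2R n⟩ ≤ r2} := by
        ext g; simp [Set.mem_iInter]
      rw [this]
      exact MeasurableSet.iInter fun n => measurableSet_le (measurable_pi_apply _) measurable_const
    · apply MeasurableSet.compl
      have : {g : ↥(SE2 ∪ SP2) → ℝ | ∀ n : Fin N2,
          g ⟨Sum.inr (Sum.inr (Sum.inl n)), hmP2aR n⟩ + g ⟨Sum.inr (Sum.inr (Sum.inr n)), hmP2bR n⟩ ≤ rs}
          = ⋂ n : Fin N2, {g : ↥(SE2 ∪ SP2) → ℝ |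
            g ⟨Sum.inr (Sum.inr (Sum.inl n)), hmP2aR n⟩ + g ⟨Sum.inr (Sum.inr (Sum.inr n)), hmP2bR n⟩ ≤ rs} := by
        ext g; simp [Set.mem_iInter]
      rw [this]
      exact MeasurableSet.iInter fun n => by
        refine measurableSet_le (Measurable.add ?_ ?_) measurable_const <;>
          exact measurable_pi_apply _
  have htop : μ ((S1ᶜ ∩ P1ᶜ) ∩ (S2ᶜ ∩ P2ᶜ)) = μ (S1ᶜ ∩ P1ᶜ) * μ (S2ᶜ ∩ P2ᶜ) := by
    have h := (hindep.indepFun_finset (SE1 ∪ SP1) (SE2 ∪ SP2) hd_LR hfm).measure_inter_preimage_eq_mul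
      _ _ hBLm hBRm
    rw [hLpre, hRpre] at h
    exact h
  -- Step 5 : numerics
  have hS1c : μ S1ᶜ = 1 - ENNReal.ofReal (c1 ^ N1) := by
    rw [prob_compl_eq_one_sub hS1m, hS1val]
  have hS2c : μ S2ᶜ = 1 - ENNReal.ofReal (c2 ^ N2) := by
    rw [prob_compl_eq_one_sub hS2m, hS2val]
  have hP1c : μ P1ᶜ = 1 - ENNReal.ofReal (d1 ^ N1) := by
    rw [prob_compl_eq_one_sub hP1m, hP1val]
  have hP2c : μ P2ᶜ = 1 - ENNReal.ofReal (d2 ^ N2) := by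
    rw [prob_compl_eq_one_sub hP2m, hP2val]
  rw [htop, hleft, hright, hS1c, hS2c, hP1c, hP2c]
  have hX1 : ENNReal.ofReal (c1 ^ N1) ≤ 1 :=
    ENNReal.ofReal_le_one.2 (pow_le_one₀ hc1_nonneg hc1_le_one)
  have hX2 : ENNReal.ofReal (c2 ^ N2) ≤ 1 :=
    ENNReal.ofReal_le_one.2 (pow_le_one₀ hc2_nonneg hc2_le_one)
  have hY1 : ENNReal.ofReal (d1 ^ N1) ≤ 1 :=
    ENNReal.ofReal_le_one.2 (pow_le_one₀ hd1_nonneg hd1_le_one)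
  have hY2 : ENNReal.ofReal (d2 ^ N2) ≤ 1 :=
    ENNReal.ofReal_le_one.2 (pow_le_one₀ hd2_nonneg hd2_le_one)
  have hA1 : (1 : ℝ≥0∞) - ENNReal.ofReal (c1 ^ N1) ≤ 1 := tsub_le_self
  have hA2 : (1 : ℝ≥0∞) - ENNReal.ofReal (c2 ^ N2) ≤ 1 := tsub_le_self
  have hB1 : (1 : ℝ≥0∞) - ENNReal.ofReal (d1 ^ N1) ≤ 1 := tsub_le_self
  have hB2 : (1 : ℝ≥0∞) - ENNReal.ofReal (d2 ^ N2) ≤ 1 := tsub_le_self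
  have hprod_le : ((1 - ENNReal.ofReal (c1 ^ N1)) * (1 - ENNReal.ofReal (d1 ^ N1))) *
      ((1 - ENNReal.ofReal (c2 ^ N2)) * (1 - ENNReal.ofReal (d2 ^ N2))) ≤ 1 :=
    mul_le_one' (mul_le_one' hA1 hB1) (mul_le_one' hA2 hB2)
  rw [ENNReal.toReal_sub_of_le hprod_le ENNReal.one_ne_top, ENNReal.toReal_one,
    ENNReal.toReal_mul, ENNReal.toReal_mul, ENNReal.toReal_mul,
    ENNReal.toReal_sub_of_le hX1 ENNReal.one_ne_top,
    ENNReal.toReal_sub_of_le hY1 ENNReal.one_ne_top,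
    ENNReal.toReal_sub_of_le hX2 ENNReal.one_ne_top,
    ENNReal.toReal_sub_of_le hY2 ENNReal.one_ne_top,
    ENNReal.toReal_one,
    ENNReal.toReal_ofReal (pow_nonneg hc1_nonneg _),
    ENNReal.toReal_ofReal (pow_nonneg hd1_nonneg _),
    ENNReal.toReal_ofReal (pow_nonneg hc2_nonneg _),
    ENNReal.toReal_ofReal (pow_nonneg hd2_nonneg _)]
  ring

end MainProof
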